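/- Let X be a conjugacy class of involutions in the semidirect product G̃ = Z ⋊ W containing x = (a, u), and let X̂ be the conjugacy class of a in W. If the commuting involution graph C(W, X̂) is not connected, then the commuting involution graph C(G̃, X) is not connected. -/

import Mathlib

namespace AddAut

variable (A : Type*) [Add A]

/-- The group structure on `AddAut A` (composition), as in the older Mathlib. -/
instance group : Group (AddAut A) where
  mul g h := AddEquiv.trans h g
  one := AddEquiv.refl _
  inv := AddEquiv.symm
  mul_assoc _ _ _ := rfl
  one_mul _ := rfl
  mul_one _ := rfl
  inv_mul_cancel := AddEquiv.self_trans_symm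

variable {A}

@[simp]
theorem group_mul_apply (e₁ e₂ : AddAut A) (m : A) : (e₁ * e₂) m = e₁ (e₂ m) :=
  rfl

@[simp]
theorem group_one_apply (m : A) : (1 : AddAut A) m = m :=
  rfl

end AddAut

/-- The semidirect product `Z ⋊ W`, where the group `W` acts on the right on the additive
abelian group `Z` by additive automorphisms (the right action is encoded as a homomorphism
from the multiplicative opposite of `W`).  Elements are pairs `(a, u)` with `a ∈ W`, `u ∈ Z`,
and multiplication is given by `(a, u) * (b, v) = (a * b, u ^ b + v)`, where `u ^ b` denotes
the action of `b` on `u`. -/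
@[ext]
structure SDP {W Z : Type*} [Group W] [AddCommGroup Z] (φ : Wᵐᵒᵖ →* AddAut Z) where
  /-- the `W`-component -/
  w : W
  /-- the `Z`-component -/
  z : Z

namespace SDP

variable {W Z : Type*} [Group W] [AddCommGroup Z] {φ : Wᵐᵒᵖ →* AddAut Z}

instance : Mul (SDP φ) := ⟨fun x y => ⟨x.w * y.w, φ (MulOpposite.op y.w) x.z + y.z⟩⟩
instance : One (SDP φ) := ⟨⟨1, 0⟩⟩
instance : Inv (SDP φ) := ⟨fun x => ⟨x.w⁻¹, -(φ (MulOpposite.op x.w⁻¹) x.z)⟩⟩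

@[simp] theorem mul_w (x y : SDP φ) : (x * y).w = x.w * y.w := rfl
@[simp] theorem mul_z (x y : SDP φ) : (x * y).z = φ (MulOpposite.op y.w) x.z + y.z := rfl
@[simp] theorem one_w : (1 : SDP φ).w = 1 := rfl
@[simp] theorem one_z : (1 : SDP φ).z = 0 := rfl
@[simp] theorem inv_w (x : SDP φ) : x⁻¹.w = x.w⁻¹ := rfl
@[simp] theorem inv_z (x : SDP φ) : x⁻¹.z = -(φ (MulOpposite.op x.w⁻¹) x.z) := rfl

instance : Group (SDP φ) where
  mul_assoc x y z := by
    ext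
    · simp [mul_assoc]
    · simp only [mul_z, mul_w, map_add]
      rw [← AddAut.group_mul_apply, ← map_mul, ← MulOpposite.op_mul, add_assoc]
  one_mul x := by ext <;> simp
  mul_one x := by ext <;> simp
  inv_mul_cancel x := by
    ext
    · simp
    · simp only [mul_z, inv_w, inv_z, mul_w, inv_mul_cancel, one_z, map_neg]
      rw [← AddAut.group_mul_apply, ← map_mul, ← MulOpposite.op_mul]
      simp

end SDP

/-- The commuting involution graph on a set `X` of elements of a group `G`: the vertices are
the elements of `X`, and two distinct vertices are adjacent iff they commute in `G`. -/
def commGraph (G : Type*) [Group G] (X : Set G) : SimpleGraph X where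
  Adj x y := (x : G) ≠ (y : G) ∧ (x : G) * y = (y : G) * x
  symm := ⟨fun x y h => ⟨h.1.symm, h.2.symm⟩⟩
  loopless := ⟨fun x h => h.1 rfl⟩

/-- Projection to the `W`-component as a group homomorphism. -/
def SDP.projW {W Z : Type*} [Group W] [AddCommGroup Z] (φ : Wᵐᵒᵖ →* AddAut Z) :
    SDP φ →* W where
  toFun := SDP.w
  map_one' := rfl
  map_mul' _ _ := rfl

theorem push_walk {W Z : Type*} [Group W] [AddCommGroup Z] {φ : Wᵐᵒᵖ →* AddAut Z}
    (X : Set (SDP φ)) (Xhat : Set W) (hmem : ∀ g ∈ X, g.w ∈ Xhat)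
    {a b : X} (p : (commGraph (SDP φ) X).Walk a b) :
    (commGraph W Xhat).Reachable ⟨(a : SDP φ).w, hmem _ a.2⟩ ⟨(b : SDP φ).w, hmem _ b.2⟩ := by
  induction p with
  | nil => exact SimpleGraph.Reachable.refl _
  | @cons a b c h p ih =>
    have hcomm : (a : SDP φ).w * (b : SDP φ).w = (b : SDP φ).w * (a : SDP φ).w :=
      congrArg SDP.w h.2
    by_cases heq : (a : SDP φ).w = (b : SDP φ).w
    · have : (⟨(a : SDP φ).w, hmem _ a.2⟩ : Xhat) = ⟨(b : SDP φ).w, hmem _ b.2⟩ :=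
        Subtype.ext heq
      rw [this]; exact ih
    · have hadj : (commGraph W Xhat).Adj ⟨(a : SDP φ).w, hmem _ a.2⟩
          ⟨(b : SDP φ).w, hmem _ b.2⟩ := ⟨heq, hcomm⟩
      exact hadj.reachable.trans ih

theorem lift_conj {W Z : Type*} [Group W] [AddCommGroup Z] {φ : Wᵐᵒᵖ →* AddAut Z}
    (x : SDP φ) (c : W) (hc : IsConj x.w c) : ∃ y : SDP φ, IsConj x y ∧ y.w = c := by
  rw [isConj_iff] at hc
  obtain ⟨g, hg⟩ := hc
  refine ⟨(⟨g, 0⟩ : SDP φ) * x * (⟨g, 0⟩ : SDP φ)⁻¹, ?_, ?_⟩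
  · exact isConj_iff.mpr ⟨⟨g, 0⟩, rfl⟩
  · show g * x.w * g⁻¹ = c
    exact hg

/-- Let X be a conjugacy class of involutions in the semidirect product
G-tilde = Z ⋊ W containing x = (a, u), and let X-hat be the conjugacy class of a in W.
If the commuting involution graph C(W, X-hat) is not connected, then the commuting
involution graph C(G-tilde, X) is not connected. -/
theorem stmt1 {W Z : Type*} [Group W] [AddCommGroup Z] (φ : Wᵐᵒᵖ →* AddAut Z)
    (x : SDP φ) (hx : orderOf x = 2)
    (X : Set (SDP φ)) (hX : X = {y | IsConj x y})
    (Xhat : Set W) (hXhat : Xhat = {c | IsConj x.w c})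
    (hdisc : ¬ (commGraph W Xhat).Connected) :
    ¬ (commGraph (SDP φ) X).Connected := by
  intro hconn
  apply hdisc
  have hmem : ∀ g ∈ X, g.w ∈ Xhat := by
    intro g hg
    rw [hX] at hg; rw [hXhat]
    exact (SDP.projW φ).map_isConj hg
  rw [SimpleGraph.connected_iff]
  constructor
  · rintro ⟨c, hc⟩ ⟨d, hd⟩
    have hc' : IsConj x.w c := by rw [hXhat] at hc; exact hc
    have hd' : IsConj x.w d := by rw [hXhat] at hd; exact hd
    obtain ⟨y, hy, hyw⟩ := lift_conj x c hc'
    obtain ⟨y', hy', hyw'⟩ := lift_conj x d hd'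
    have hyX : y ∈ X := by rw [hX]; exact hy
    have hy'X : y' ∈ X := by rw [hX]; exact hy'
    obtain ⟨p⟩ := hconn.preconnected ⟨y, hyX⟩ ⟨y', hy'X⟩
    have := push_walk X Xhat hmem p
    convert this using 2 <;> simp [hyw, hyw']
  · refine ⟨⟨x.w, ?_⟩⟩
    rw [hXhat]; exact IsConj.refl _
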